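/- The assignment P(R = k) = s_k (3 − 2√2)^k / (√2 − 1) for k ≥ 1 defines a probability distribution on the positive integers, i.e., ∑_{k=1}^∞ s_k (3 − 2√2)^k = √2 − 1. -/

import Mathlib

open Equiv Finset Filter Topology

/-- Direct sum of permutations: `(σ⊕τ)(i)=σ(i)` for `i<k`, `(σ⊕τ)(k+i)=k+τ(i)`. -/
def directSum {k l : ℕ} (σ : Equiv.Perm (Fin k)) (τ : Equiv.Perm (Fin l)) :
    Equiv.Perm (Fin (k + l)) :=
  finSumFinEquiv.symm.trans ((Equiv.sumCongr σ τ).trans finSumFinEquiv)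

/-- Skew sum of permutations: `(σ⊖τ)(i)=σ(i)+l` for `i<k`, `(σ⊖τ)(k+i)=τ(i)`. -/
def skewSum {k l : ℕ} (σ : Equiv.Perm (Fin k)) (τ : Equiv.Perm (Fin l)) :
    Equiv.Perm (Fin (k + l)) :=
  finSumFinEquiv.symm.trans ((Equiv.sumCongr σ τ).trans
    ((Equiv.sumComm (Fin k) (Fin l)).trans (finSumFinEquiv.trans (finCongr (Nat.add_comm l k)))))

/-- A permutation is separable if it is the singleton or a direct or skew sum of
two separable permutations. -/
inductive Separable : {n : ℕ} → Equiv.Perm (Fin n) → Prop where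
  | single : Separable (Equiv.refl (Fin 1))
  | dsum {k l : ℕ} {σ : Equiv.Perm (Fin k)} {τ : Equiv.Perm (Fin l)} :
      Separable σ → Separable τ → Separable (directSum σ τ)
  | ssum {k l : ℕ} {σ : Equiv.Perm (Fin k)} {τ : Equiv.Perm (Fin l)} :
      Separable σ → Separable τ → Separable (skewSum σ τ)

/-- `numSep n` = number of separable permutations of `[n]` (denoted `s_n`). -/
noncomputable def numSep (n : ℕ) : ℕ := Nat.card {σ : Equiv.Perm (Fin n) // Separable σ}



section vals
variable {a b : ℕ} (μ : Equiv.Perm (Fin a)) (ν : Equiv.Perm (Fin b))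

lemma directSum_castAdd (j : Fin a) : (directSum μ ν) (Fin.castAdd b j) = Fin.castAdd b (μ j) := by
  simp only [directSum, Equiv.trans_apply, finSumFinEquiv_symm_apply_castAdd,
    Equiv.sumCongr_apply, Sum.map_inl, finSumFinEquiv_apply_left]

lemma directSum_natAdd (j : Fin b) : (directSum μ ν) (Fin.natAdd a j) = Fin.natAdd a (ν j) := by
  simp only [directSum, Equiv.trans_apply, finSumFinEquiv_symm_apply_natAdd,
    Equiv.sumCongr_apply, Sum.map_inr, finSumFinEquiv_apply_right]

lemma skewSum_castAdd (j : Fin a) : ((skewSum μ ν) (Fin.castAdd b j) : ℕ) = b + μ j := by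
  simp only [skewSum, Equiv.trans_apply, finSumFinEquiv_symm_apply_castAdd,
    Equiv.sumCongr_apply, Sum.map_inl, Equiv.sumComm_apply, Sum.swap_inl,
    finSumFinEquiv_apply_right, finCongr_apply, Fin.coe_cast, Fin.coe_natAdd]

lemma skewSum_natAdd (j : Fin b) : ((skewSum μ ν) (Fin.natAdd a j) : ℕ) = ν j := by
  simp only [skewSum, Equiv.trans_apply, finSumFinEquiv_symm_apply_natAdd,
    Equiv.sumCongr_apply, Sum.map_inr, Equiv.sumComm_apply, Sum.swap_inr,
    finSumFinEquiv_apply_left, finCongr_apply, Fin.coe_cast, Fin.coe_castAdd]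

lemma directSum_val_lo (i : Fin (a+b)) (h : i.val < a) :
    ((directSum μ ν) i : ℕ) = μ ⟨i.val, h⟩ := by
  have e : (directSum μ ν) i = (directSum μ ν) (Fin.castAdd b ⟨i.val, h⟩) := by
    congr 1
  rw [e, directSum_castAdd]; rfl

lemma directSum_val_hi (i : Fin (a+b)) (h : a ≤ i.val) :
    ((directSum μ ν) i : ℕ) = a + ν ⟨i.val - a, by omega⟩ := by
  have e : (directSum μ ν) i = (directSum μ ν) (Fin.natAdd a ⟨i.val - a, by omega⟩) := by
    congr 1; ext; simp only [Fin.coe_natAdd]; omega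
  rw [e, directSum_natAdd]; rfl

lemma skewSum_val_lo (i : Fin (a+b)) (h : i.val < a) :
    ((skewSum μ ν) i : ℕ) = b + μ ⟨i.val, h⟩ := by
  have e : (skewSum μ ν) i = (skewSum μ ν) (Fin.castAdd b ⟨i.val, h⟩) := by
    congr 1
  rw [e, skewSum_castAdd]

lemma skewSum_val_hi (i : Fin (a+b)) (h : a ≤ i.val) :
    ((skewSum μ ν) i : ℕ) = ν ⟨i.val - a, by omega⟩ := by
  have e : (skewSum μ ν) i = (skewSum μ ν) (Fin.natAdd a ⟨i.val - a, by omega⟩) := by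
    congr 1; ext; simp only [Fin.coe_natAdd]; omega
  rw [e, skewSum_natAdd]
end vals

-- ===== SD / SK =====
def SD {n : ℕ} (σ : Equiv.Perm (Fin n)) (k : ℕ) : Prop := ∀ i : Fin n, (i : ℕ) < k → ((σ i : ℕ) < k)
def SK {n : ℕ} (σ : Equiv.Perm (Fin n)) (k : ℕ) : Prop := ∀ i : Fin n, (i : ℕ) < k → n - k ≤ (σ i : ℕ)

lemma sep_pos {n : ℕ} {σ : Equiv.Perm (Fin n)} (h : Separable σ) : 0 < n := by
  induction h with
  | single => omega
  | dsum _ _ ih1 ih2 => omega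
  | ssum _ _ ih1 ih2 => omega

lemma SD_directSum {a b : ℕ} (μ : Equiv.Perm (Fin a)) (ν : Equiv.Perm (Fin b)) :
    SD (directSum μ ν) a := by
  intro i hi
  rw [directSum_val_lo μ ν i hi]
  exact (μ ⟨i.val, hi⟩).2

lemma SK_skewSum {a b : ℕ} (μ : Equiv.Perm (Fin a)) (ν : Equiv.Perm (Fin b)) :
    SK (skewSum μ ν) a := by
  intro i hi
  rw [skewSum_val_lo μ ν i hi]
  omega

-- exclusivity
lemma not_SD_and_SK {n k k' : ℕ} (σ : Equiv.Perm (Fin n)) (hk : 0 < k) (hk' : 0 < k')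
    (hkn : k < n) (hk'n : k' < n) (h1 : SD σ k) (h2 : SK σ k') : False := by
  set m := min k k' with hm
  -- image of [0,m) is inside [n-k', k)
  have key : ∀ i : Fin n, (i : ℕ) < m → (σ i : ℕ) ∈ Finset.Ico (n - k') k := by
    intro i hi
    simp only [Finset.mem_Ico]
    exact ⟨h2 i (lt_of_lt_of_le hi (min_le_right _ _)),
      h1 i (lt_of_lt_of_le hi (min_le_left _ _))⟩
  have hcard : m ≤ (Finset.Ico (n - k') k).card := by
    have : ((Finset.univ.filter (fun i : Fin n => (i:ℕ) < m)).image (fun i => (σ i : ℕ))) ⊆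
        Finset.Ico (n - k') k := by
      intro x hx
      simp only [Finset.mem_image, Finset.mem_filter] at hx
      obtain ⟨i, ⟨_, hi⟩, rfl⟩ := hx
      exact key i hi
    have hinj : ((Finset.univ.filter (fun i : Fin n => (i:ℕ) < m)).image
        (fun i => (σ i : ℕ))).card = (Finset.univ.filter (fun i : Fin n => (i:ℕ) < m)).card := by
      apply Finset.card_image_of_injOn
      intro x _ y _ hxy
      exact σ.injective (Fin.ext hxy)
    have hmn : m < n := lt_of_le_of_lt (min_le_left _ _) hkn
    calc m = (Finset.univ.filter (fun i : Fin n => (i:ℕ) < m)).card := by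
            have : (Finset.univ.filter (fun i : Fin n => (i:ℕ) < m)) =
                Finset.Iio (⟨m, hmn⟩ : Fin n) := by
              ext i; simp [Finset.mem_Iio, Fin.lt_def]
            rw [this, Fin.card_Iio]
      _ = _ := hinj.symm
      _ ≤ _ := Finset.card_le_card this
  rw [Nat.card_Ico] at hcard
  omega

-- ===== complement =====
def cpl {n : ℕ} (σ : Equiv.Perm (Fin n)) : Equiv.Perm (Fin n) := σ.trans (Fin.revPerm)

lemma compl_val {n : ℕ} (σ : Equiv.Perm (Fin n)) (i : Fin n) :
    (cpl σ i : ℕ) = n - 1 - (σ i : ℕ) := by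
  simp [cpl, Fin.rev]
  omega

lemma cpl_cpl {n : ℕ} (σ : Equiv.Perm (Fin n)) : cpl (cpl σ) = σ := by
  ext i
  simp [cpl]

lemma compl_directSum {a b : ℕ} (μ : Equiv.Perm (Fin a)) (ν : Equiv.Perm (Fin b)) :
    cpl (directSum μ ν) = skewSum (cpl μ) (cpl ν) := by
  apply Equiv.ext
  intro i
  apply Fin.ext
  rcases lt_or_ge (i : ℕ) a with h | h
  · rw [compl_val, directSum_val_lo μ ν i h, skewSum_val_lo _ _ i h, compl_val]
    have := (μ ⟨i.val, h⟩).2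
    omega
  · rw [compl_val, directSum_val_hi μ ν i h, skewSum_val_hi _ _ i h, compl_val]
    have := (ν ⟨i.val - a, by omega⟩).2
    omega

lemma compl_skewSum {a b : ℕ} (μ : Equiv.Perm (Fin a)) (ν : Equiv.Perm (Fin b)) :
    cpl (skewSum μ ν) = directSum (cpl μ) (cpl ν) := by
  apply Equiv.ext
  intro i
  apply Fin.ext
  rcases lt_or_ge (i : ℕ) a with h | h
  · rw [compl_val, skewSum_val_lo μ ν i h, directSum_val_lo _ _ i h, compl_val]
    have := (μ ⟨i.val, h⟩).2
    omega
  · rw [compl_val, skewSum_val_hi μ ν i h, directSum_val_hi _ _ i h, compl_val]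
    have := (ν ⟨i.val - a, by omega⟩).2
    omega

lemma compl_sep {n : ℕ} {σ : Equiv.Perm (Fin n)} (h : Separable σ) : Separable (cpl σ) := by
  induction h with
  | single =>
      have : cpl (Equiv.refl (Fin 1)) = Equiv.refl (Fin 1) := Subsingleton.elim _ _
      rw [this]; exact Separable.single
  | dsum h1 h2 ih1 ih2 => rw [compl_directSum]; exact Separable.ssum ih1 ih2
  | ssum h1 h2 ih1 ih2 => rw [compl_skewSum]; exact Separable.dsum ih1 ih2

lemma SK_compl_iff {n k : ℕ} (σ : Equiv.Perm (Fin n)) (hk : k ≤ n) :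
    SK (cpl σ) k ↔ SD σ k := by
  constructor
  · intro h i hi
    have := h i hi
    rw [compl_val] at this
    have h2 := (σ i).2
    omega
  · intro h i hi
    rw [compl_val]
    have := h i hi
    omega

-- ===== inversion =====
lemma sep_inversion {n : ℕ} {σ : Equiv.Perm (Fin n)} (h : Separable σ) (hn : 2 ≤ n) :
    (∃ k, 0 < k ∧ k < n ∧ SD σ k) ∨ (∃ k, 0 < k ∧ k < n ∧ SK σ k) := by
  cases h with
  | single => omega
  | @dsum a b μ ν h1 h2 =>
      exact Or.inl ⟨a, sep_pos h1, by have := sep_pos h2; omega, SD_directSum μ ν⟩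
  | @ssum a b μ ν h1 h2 =>
      exact Or.inr ⟨a, sep_pos h1, by have := sep_pos h2; omega, SK_skewSum μ ν⟩

lemma finmk_inj {n a b : ℕ} {ha : a < n} {hb : b < n} (h : (⟨a, ha⟩ : Fin n) = ⟨b, hb⟩) :
    a = b := by injection h

open Classical in
lemma SD_ge {n k : ℕ} {σ : Equiv.Perm (Fin n)} (hk : k ≤ n) (h : SD σ k) :
    ∀ i : Fin n, k ≤ (i : ℕ) → k ≤ (σ i : ℕ) := by
  intro i hi
  by_contra hc
  push_neg at hc
  have finj : Function.Injective
      (fun j : Fin k => (⟨(σ ⟨j.val, lt_of_lt_of_le j.2 hk⟩ : ℕ), h _ j.2⟩ : Fin k)) := by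
    intro x y hxy
    have hv := finmk_inj hxy
    have := σ.injective (Fin.ext hv)
    have := finmk_inj this
    exact Fin.ext this
  have fsurj := Finite.surjective_of_injective finj
  obtain ⟨j, hj⟩ := fsurj ⟨(σ i : ℕ), hc⟩
  have hv := finmk_inj hj
  have := σ.injective (Fin.ext hv)
  have : (j : ℕ) = (i : ℕ) := congrArg Fin.val this
  omega

noncomputable def dL {n : ℕ} (k : ℕ) (σ : Equiv.Perm (Fin n)) : Equiv.Perm (Fin k) := by
  classical
  exact if h : k ≤ n ∧ SD σ k then
    Equiv.ofBijective (fun i => ⟨(σ ⟨i.val, lt_of_lt_of_le i.2 h.1⟩ : ℕ), h.2 _ i.2⟩)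
      (Finite.injective_iff_bijective.mp (fun x y hxy => by
        have hv := finmk_inj hxy
        have := σ.injective (Fin.ext hv)
        exact Fin.ext (finmk_inj this)))
  else 1

noncomputable def dR {n : ℕ} (k : ℕ) (σ : Equiv.Perm (Fin n)) : Equiv.Perm (Fin (n - k)) := by
  classical
  exact if h : k ≤ n ∧ SD σ k then
    Equiv.ofBijective (fun i => ⟨(σ ⟨k + i.val, by omega⟩ : ℕ) - k, by
        have h1 := SD_ge h.1 h.2 ⟨k + i.val, by omega⟩ (by simp)
        have h2 := (σ ⟨k + i.val, by omega⟩).2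
        omega⟩)
      (Finite.injective_iff_bijective.mp (fun x y hxy => by
        have hx := SD_ge h.1 h.2 ⟨k + x.val, by omega⟩ (by simp)
        have hy := SD_ge h.1 h.2 ⟨k + y.val, by omega⟩ (by simp)
        have hv0 := finmk_inj hxy
        have hv : (σ ⟨k + x.val, by omega⟩ : ℕ) = (σ ⟨k + y.val, by omega⟩ : ℕ) := by omega
        have := σ.injective (Fin.ext hv)
        have := finmk_inj this
        exact Fin.ext (by omega)))
  else 1

lemma dL_val {n k : ℕ} {σ : Equiv.Perm (Fin n)} (h1 : k ≤ n) (h2 : SD σ k) (i : Fin k) :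
    (dL k σ i : ℕ) = σ ⟨i.val, lt_of_lt_of_le i.2 h1⟩ := by
  unfold dL
  rw [dif_pos ⟨h1, h2⟩]
  rfl

lemma dR_val {n k : ℕ} {σ : Equiv.Perm (Fin n)} (h1 : k ≤ n) (h2 : SD σ k) (i : Fin (n - k)) :
    (dR k σ i : ℕ) = (σ ⟨k + i.val, by omega⟩ : ℕ) - k := by
  unfold dR
  rw [dif_pos ⟨h1, h2⟩]
  rfl

lemma dR_val' {n k : ℕ} {σ : Equiv.Perm (Fin n)} (h1 : k ≤ n) (h2 : SD σ k) (i : Fin (n - k)) :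
    k + (dR k σ i : ℕ) = σ ⟨k + i.val, by omega⟩ := by
  rw [dR_val h1 h2]
  have := SD_ge h1 h2 ⟨k + i.val, by omega⟩ (by simp)
  omega

-- ===== value transfer =====
lemma val_congr {n : ℕ} (σ : Equiv.Perm (Fin n)) {x y : ℕ} (hx : x < n) (hy : y < n)
    (h : x = y) : (σ ⟨x, hx⟩ : ℕ) = σ ⟨y, hy⟩ := by subst h; rfl

lemma sep_of_valEq {m n : ℕ} (e : m = n) {σ : Equiv.Perm (Fin m)} {τ : Equiv.Perm (Fin n)}
    (h : ∀ i : Fin m, (σ i : ℕ) = (τ ⟨i.val, e ▸ i.2⟩ : ℕ)) (hs : Separable σ) : Separable τ := by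
  subst e
  have : σ = τ := by
    apply Equiv.ext
    intro i
    exact Fin.ext (h i)
  rwa [this] at hs

-- ===== hereditary =====
theorem sep_decomp : ∀ n : ℕ, ∀ σ : Equiv.Perm (Fin n), Separable σ → ∀ k : ℕ,
    0 < k → k < n → SD σ k → Separable (dL k σ) ∧ Separable (dR k σ) := by
  intro n
  induction n using Nat.strong_induction_on with
  | _ n IH =>
    intro σ hsep k hk0 hkn hSD
    have hkn' : k ≤ n := le_of_lt hkn
    cases hsep with
    | single => omega
    | @dsum a b μ ν hμ hν =>
      have ha : 0 < a := sep_pos hμ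
      have hb : 0 < b := sep_pos hν
      rcases lt_trichotomy k a with hlt | heq | hgt
      · -- k < a
        have hka : k ≤ a := le_of_lt hlt
        have hSDμ : SD μ k := by
          intro i hi
          have p1 : (i : ℕ) < a + b := by omega
          have h1 : ((directSum μ ν) ⟨i.val, p1⟩ : ℕ) = μ ⟨i.val, i.2⟩ :=
            directSum_val_lo μ ν _ i.2
          have h2 := hSD ⟨i.val, p1⟩ (by show (i : ℕ) < k; omega)
          have h3 : (μ ⟨i.val, i.2⟩ : ℕ) = μ i := rfl
          have h4 : ((⟨i.val, p1⟩ : Fin (a + b)) : ℕ) = i.val := rfl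
          omega
        obtain ⟨hL, hR⟩ := IH a (by omega) μ hμ k hk0 hlt hSDμ
        constructor
        · refine sep_of_valEq rfl (fun i => ?_) hL
          have p1 : (i : ℕ) < a := by omega
          have p2 : (i : ℕ) < a + b := by omega
          have e1 : (dL k μ i : ℕ) = μ ⟨i.val, p1⟩ := dL_val hka hSDμ i
          have e2 : (dL k (directSum μ ν) (⟨i.val, i.2⟩ : Fin k) : ℕ) =
              (directSum μ ν) ⟨i.val, p2⟩ := dL_val hkn' hSD _
          have e3 : ((directSum μ ν) ⟨i.val, p2⟩ : ℕ) = μ ⟨i.val, p1⟩ :=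
            directSum_val_lo μ ν _ p1
          omega
        · refine sep_of_valEq (by omega : (a - k) + b = a + b - k)
            (fun i => ?_) (Separable.dsum hR hν)
          have hik : i.val < a + b - k := by omega
          have p1 : k + i.val < a + b := by omega
          have e2 : (dR k (directSum μ ν) (⟨i.val, hik⟩ : Fin (a + b - k)) : ℕ) =
              ((directSum μ ν) ⟨k + i.val, p1⟩ : ℕ) - k := dR_val hkn' hSD _
          rcases lt_or_ge i.val (a - k) with hi | hi
          · have p2 : k + i.val < a := by omega
            have e1 : ((directSum (dR k μ) ν) i : ℕ) = (dR k μ) ⟨i.val, hi⟩ :=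
              directSum_val_lo _ ν i hi
            have e3 : ((dR k μ) ⟨i.val, hi⟩ : ℕ) = (μ ⟨k + i.val, p2⟩ : ℕ) - k :=
              dR_val hka hSDμ _
            have e4 : ((directSum μ ν) ⟨k + i.val, p1⟩ : ℕ) = μ ⟨k + i.val, p2⟩ :=
              directSum_val_lo μ ν _ p2
            omega
          · have p2 : k + i.val - a < b := by omega
            have p3 : i.val - (a - k) < b := by omega
            have e1 : ((directSum (dR k μ) ν) i : ℕ) = (a - k) + ν ⟨i.val - (a - k), p3⟩ :=
              directSum_val_hi _ ν i hi
            have e3 : ((directSum μ ν) ⟨k + i.val, p1⟩ : ℕ) =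
                a + ν ⟨k + i.val - a, p2⟩ := directSum_val_hi μ ν _ (by show a ≤ k + i.val; omega)
            have e4 : (ν ⟨k + i.val - a, p2⟩ : ℕ) = ν ⟨i.val - (a - k), p3⟩ :=
              val_congr ν _ _ (by omega)
            omega
      · -- k = a
        subst heq
        constructor
        · refine sep_of_valEq rfl (fun i => ?_) hμ
          have p1 : (i : ℕ) < k + b := by omega
          have e2 : (dL k (directSum μ ν) (⟨i.val, i.2⟩ : Fin k) : ℕ) =
              (directSum μ ν) ⟨i.val, p1⟩ := dL_val hkn' hSD _
          have e3 : ((directSum μ ν) ⟨i.val, p1⟩ : ℕ) = μ ⟨i.val, i.2⟩ :=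
            directSum_val_lo μ ν _ i.2
          have e4 : (μ ⟨i.val, i.2⟩ : ℕ) = μ i := rfl
          omega
        · refine sep_of_valEq (by omega : b = k + b - k) (fun i => ?_) hν
          have hik : i.val < k + b - k := by omega
          have p1 : k + i.val < k + b := by omega
          have p2 : k + i.val - k < b := by omega
          have e2 : (dR k (directSum μ ν) (⟨i.val, hik⟩ : Fin (k + b - k)) : ℕ) =
              ((directSum μ ν) ⟨k + i.val, p1⟩ : ℕ) - k := dR_val hkn' hSD _
          have e3 : ((directSum μ ν) ⟨k + i.val, p1⟩ : ℕ) =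
              k + ν ⟨k + i.val - k, p2⟩ := directSum_val_hi μ ν _ (by show k ≤ k + i.val; omega)
          have e4 : (ν ⟨k + i.val - k, p2⟩ : ℕ) = ν ⟨i.val, i.2⟩ :=
            val_congr ν _ _ (by omega)
          have e5 : (ν ⟨i.val, i.2⟩ : ℕ) = ν i := rfl
          omega
      · -- a < k
        have hSDν : SD ν (k - a) := by
          intro i hi
          have p1 : a + i.val < a + b := by omega
          have p2 : a + i.val - a < b := by omega
          have h1 : ((directSum μ ν) ⟨a + i.val, p1⟩ : ℕ) =
              a + ν ⟨a + i.val - a, p2⟩ := directSum_val_hi μ ν _ (by show a ≤ a + i.val; omega)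
          have h2 := hSD ⟨a + i.val, p1⟩ (by show a + i.val < k; omega)
          have h3 : (ν ⟨a + i.val - a, p2⟩ : ℕ) = ν ⟨i.val, i.2⟩ :=
            val_congr ν _ _ (by omega)
          have h4 : (ν ⟨i.val, i.2⟩ : ℕ) = ν i := rfl
          have h5 : ((⟨a + i.val, p1⟩ : Fin (a + b)) : ℕ) = a + i.val := rfl
          omega
        obtain ⟨hL, hR⟩ := IH b (by omega) ν hν (k - a) (by omega) (by omega) hSDν
        have hkab : k - a ≤ b := by omega
        constructor
        · refine sep_of_valEq (by omega : a + (k - a) = k)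
            (fun i => ?_) (Separable.dsum hμ hL)
          have hik : i.val < k := by omega
          have p1 : (i : ℕ) < a + b := by omega
          have e2 : (dL k (directSum μ ν) (⟨i.val, hik⟩ : Fin k) : ℕ) =
              (directSum μ ν) ⟨i.val, p1⟩ := dL_val hkn' hSD _
          rcases lt_or_ge i.val a with hi | hi
          · have e1 : ((directSum μ (dL (k - a) ν)) i : ℕ) = μ ⟨i.val, hi⟩ :=
              directSum_val_lo μ _ i hi
            have e3 : ((directSum μ ν) ⟨i.val, p1⟩ : ℕ) = μ ⟨i.val, hi⟩ :=
              directSum_val_lo μ ν _ hi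
            omega
          · have p2 : i.val - a < k - a := by omega
            have p3 : i.val - a < b := by omega
            have e1 : ((directSum μ (dL (k - a) ν)) i : ℕ) =
                a + (dL (k - a) ν) ⟨i.val - a, p2⟩ := directSum_val_hi μ _ i hi
            have e3 : ((dL (k - a) ν) ⟨i.val - a, p2⟩ : ℕ) =
                ν ⟨i.val - a, p3⟩ := dL_val hkab hSDν _
            have e4 : ((directSum μ ν) ⟨i.val, p1⟩ : ℕ) =
                a + ν ⟨i.val - a, p3⟩ := directSum_val_hi μ ν _ hi
            omega
        · refine sep_of_valEq (by omega : b - (k - a) = a + b - k) (fun i => ?_) hR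
          have hik : i.val < a + b - k := by omega
          have p1 : (k - a) + i.val < b := by omega
          have p2 : k + i.val < a + b := by omega
          have p3 : k + i.val - a < b := by omega
          have e1 : ((dR (k - a) ν) i : ℕ) = (ν ⟨(k - a) + i.val, p1⟩ : ℕ) - (k - a) :=
            dR_val hkab hSDν i
          have e2 : (dR k (directSum μ ν) (⟨i.val, hik⟩ : Fin (a + b - k)) : ℕ) =
              ((directSum μ ν) ⟨k + i.val, p2⟩ : ℕ) - k := dR_val hkn' hSD _
          have e3 : ((directSum μ ν) ⟨k + i.val, p2⟩ : ℕ) =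
              a + ν ⟨k + i.val - a, p3⟩ := directSum_val_hi μ ν _ (by show a ≤ k + i.val; omega)
          have e4 : (ν ⟨k + i.val - a, p3⟩ : ℕ) = ν ⟨(k - a) + i.val, p1⟩ :=
            val_congr ν _ _ (by omega)
          have e5 := (ν ⟨(k - a) + i.val, p1⟩).2
          omega
    | @ssum a b μ ν hμ hν =>
      have ha : 0 < a := sep_pos hμ
      have hb : 0 < b := sep_pos hν
      exact absurd hSD (fun h => not_SD_and_SK _ hk0 ha hkn (by omega) h (SK_skewSum μ ν))

-- ===== cast transport =====
def castP {m n : ℕ} (e : m = n) (σ : Equiv.Perm (Fin m)) : Equiv.Perm (Fin n) :=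
  (finCongr e).permCongr σ

lemma castP_rfl {n : ℕ} (σ : Equiv.Perm (Fin n)) : castP rfl σ = σ := by
  ext i; simp [castP]

lemma castP_val {m n : ℕ} (e : m = n) (σ : Equiv.Perm (Fin m)) (i : Fin n)
    (h : i.val < m) : (castP e σ i : ℕ) = σ ⟨i.val, h⟩ := by
  subst e; rw [castP_rfl]

lemma castP_sep {m n : ℕ} (e : m = n) {σ : Equiv.Perm (Fin m)} (h : Separable σ) :
    Separable (castP e σ) := by
  subst e; rwa [castP_rfl]

-- ===== counting =====
open Classical

noncomputable def SepF (n : ℕ) : Finset (Equiv.Perm (Fin n)) :=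
  Finset.univ.filter (fun σ => Separable σ)
noncomputable def DF (n : ℕ) : Finset (Equiv.Perm (Fin n)) :=
  Finset.univ.filter (fun σ => Separable σ ∧ ∃ k, 0 < k ∧ k < n ∧ SD σ k)
noncomputable def KF (n : ℕ) : Finset (Equiv.Perm (Fin n)) :=
  Finset.univ.filter (fun σ => Separable σ ∧ ∃ k, 0 < k ∧ k < n ∧ SK σ k)
noncomputable def IndF (n : ℕ) : Finset (Equiv.Perm (Fin n)) :=
  Finset.univ.filter (fun σ => Separable σ ∧ ¬∃ k, 0 < k ∧ k < n ∧ SD σ k)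

noncomputable def minCut {n : ℕ} (σ : Equiv.Perm (Fin n)) : ℕ :=
  sInf {k | 0 < k ∧ k < n ∧ SD σ k}

lemma numSep_eq (n : ℕ) : numSep n = (SepF n).card := by
  rw [numSep, Nat.card_eq_fintype_card, SepF]
  exact Fintype.card_subtype _

lemma minCut_spec {n : ℕ} {σ : Equiv.Perm (Fin n)} (h : ∃ k, 0 < k ∧ k < n ∧ SD σ k) :
    0 < minCut σ ∧ minCut σ < n ∧ SD σ (minCut σ) :=
  Nat.sInf_mem h

lemma minCut_min {n : ℕ} {σ : Equiv.Perm (Fin n)} {j : ℕ} (hj : j < minCut σ) :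
    ¬(0 < j ∧ j < n ∧ SD σ j) := Nat.notMem_of_lt_sInf hj

-- fiber bijection
lemma fiber_card {n k : ℕ} (hk0 : 0 < k) (hkn : k < n) :
    ((DF n).filter (fun σ => minCut σ = k)).card = (IndF k).card * (SepF (n - k)).card := by
  rw [← Finset.card_product]
  refine Finset.card_bij' (fun σ _ => (dL k σ, dR k σ))
    (fun p _ => castP (by omega : k + (n - k) = n) (directSum p.1 p.2))
    ?hi ?hj ?left ?right
  case hi =>
    -- maps into target
    intro σ hσ
    simp only [DF, Finset.mem_filter, Finset.mem_univ, true_and] at hσ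
    obtain ⟨⟨hsep, hex⟩, hmc⟩ := hσ
    obtain ⟨h1, h2, h3⟩ := minCut_spec hex
    rw [hmc] at h1 h2 h3
    obtain ⟨hLsep, hRsep⟩ := sep_decomp n σ hsep k h1 h2 h3
    simp only [Finset.mem_product, IndF, SepF, Finset.mem_filter, Finset.mem_univ, true_and]
    refine ⟨⟨hLsep, ?_⟩, hRsep⟩
    rintro ⟨j, hj0, hjk, hSDj⟩
    have hSDσj : SD σ j := by
      intro i hi
      have p1 : i.val < k := by omega
      have e1 : ((dL k σ) ⟨i.val, p1⟩ : ℕ) = σ ⟨i.val, i.2⟩ := dL_val (by omega) h3 _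
      have e2 := hSDj ⟨i.val, p1⟩ (by show i.val < j; omega)
      have e3 : (σ ⟨i.val, i.2⟩ : ℕ) = σ i := rfl
      have e4 : ((⟨i.val, p1⟩ : Fin k) : ℕ) = i.val := rfl
      omega
    exact minCut_min (by omega : j < minCut σ) ⟨hj0, by omega, hSDσj⟩
  case hj =>
    -- reverse maps into source
    intro p hp
    simp only [Finset.mem_product, IndF, SepF, Finset.mem_filter, Finset.mem_univ,
      true_and] at hp
    obtain ⟨⟨hαsep, hαind⟩, hβsep⟩ := hp
    set e : k + (n - k) = n := by omega
    set σ' := castP e (directSum p.1 p.2) with hσ'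
    have hSDk : SD σ' k := by
      intro i hi
      have q1 : i.val < k + (n - k) := by omega
      have e1 : (σ' i : ℕ) = (directSum p.1 p.2) ⟨i.val, q1⟩ := castP_val e _ i q1
      have e2 : ((directSum p.1 p.2) ⟨i.val, q1⟩ : ℕ) = p.1 ⟨i.val, hi⟩ :=
        directSum_val_lo _ _ _ hi
      have e3 := (p.1 ⟨i.val, hi⟩).2
      omega
    have hmc : minCut σ' = k := by
      have hmem : k ∈ {j | 0 < j ∧ j < n ∧ SD σ' j} := ⟨hk0, hkn, hSDk⟩
      apply le_antisymm (Nat.sInf_le hmem)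
      by_contra hc
      push_neg at hc
      obtain ⟨hj0, hjn, hSDj⟩ := Nat.sInf_mem (⟨k, hmem⟩ : Set.Nonempty _)
      set j := sInf {j | 0 < j ∧ j < n ∧ SD σ' j}
      have hjk : j < k := hc
      apply hαind
      refine ⟨j, hj0, hjk, ?_⟩
      intro i hi
      have p1 : (i : ℕ) < n := by omega
      have q1 : i.val < k + (n - k) := by omega
      have e1 : (σ' ⟨i.val, p1⟩ : ℕ) = (directSum p.1 p.2) ⟨i.val, q1⟩ := castP_val e _ _ q1
      have e2 : ((directSum p.1 p.2) ⟨i.val, q1⟩ : ℕ) = p.1 ⟨i.val, i.2⟩ :=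
        directSum_val_lo _ _ _ i.2
      have e3 := hSDj ⟨i.val, p1⟩ (by show i.val < j; omega)
      have e4 : (p.1 ⟨i.val, i.2⟩ : ℕ) = p.1 i := rfl
      have e5 : ((⟨i.val, p1⟩ : Fin n) : ℕ) = i.val := rfl
      omega
    simp only [DF, Finset.mem_filter, Finset.mem_univ, true_and]
    exact ⟨⟨castP_sep e (Separable.dsum hαsep hβsep), ⟨k, hk0, hkn, hSDk⟩⟩, hmc⟩
  case left =>
    -- left inverse
    intro σ hσ
    dsimp only
    simp only [DF, Finset.mem_filter, Finset.mem_univ, true_and] at hσ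
    obtain ⟨⟨hsep, hex⟩, hmc⟩ := hσ
    obtain ⟨h1, h2, h3⟩ := minCut_spec hex
    rw [hmc] at h1 h2 h3
    have hkn' : k ≤ n := by omega
    apply Equiv.ext
    intro i
    apply Fin.ext
    set e : k + (n - k) = n := by omega
    have q1 : i.val < k + (n - k) := by omega
    rw [castP_val e _ i q1]
    rcases lt_or_ge i.val k with hi | hi
    · have e2 : ((directSum (dL k σ) (dR k σ)) ⟨i.val, q1⟩ : ℕ) =
          (dL k σ) ⟨i.val, hi⟩ := directSum_val_lo _ _ _ hi
      have e3 : ((dL k σ) ⟨i.val, hi⟩ : ℕ) = σ ⟨i.val, i.2⟩ := dL_val hkn' h3 _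
      have e4 : (σ ⟨i.val, i.2⟩ : ℕ) = σ i := rfl
      omega
    · have p1 : i.val - k < n - k := by omega
      have e2 : ((directSum (dL k σ) (dR k σ)) ⟨i.val, q1⟩ : ℕ) =
          k + (dR k σ) ⟨i.val - k, p1⟩ := directSum_val_hi _ _ _ hi
      have p2 : k + (i.val - k) < n := by omega
      have e3 : k + ((dR k σ) ⟨i.val - k, p1⟩ : ℕ) = σ ⟨k + (i.val - k), p2⟩ :=
        dR_val' hkn' h3 _
      have e4 : (σ ⟨k + (i.val - k), p2⟩ : ℕ) = σ ⟨i.val, i.2⟩ := val_congr σ _ _ (by omega)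
      have e5 : (σ ⟨i.val, i.2⟩ : ℕ) = σ i := rfl
      omega
  case right =>
    -- right inverse
    intro p hp
    simp only [Finset.mem_product, IndF, SepF, Finset.mem_filter, Finset.mem_univ,
      true_and] at hp
    obtain ⟨⟨hαsep, _⟩, hβsep⟩ := hp
    set e : k + (n - k) = n := by omega
    set σ' := castP e (directSum p.1 p.2) with hσ'
    have hSDk : SD σ' k := by
      intro i hi
      have q1 : i.val < k + (n - k) := by omega
      have e1 : (σ' i : ℕ) = (directSum p.1 p.2) ⟨i.val, q1⟩ := castP_val e _ i q1
      have e2 : ((directSum p.1 p.2) ⟨i.val, q1⟩ : ℕ) = p.1 ⟨i.val, hi⟩ :=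
        directSum_val_lo _ _ _ hi
      have e3 := (p.1 ⟨i.val, hi⟩).2
      omega
    have hkn' : k ≤ n := by omega
    have hdL : dL k σ' = p.1 := by
      apply Equiv.ext; intro i; apply Fin.ext
      have p1 : (i : ℕ) < n := by omega
      have q1 : i.val < k + (n - k) := by omega
      have e1 : ((dL k σ') i : ℕ) = σ' ⟨i.val, p1⟩ := dL_val hkn' hSDk i
      have e2 : (σ' ⟨i.val, p1⟩ : ℕ) = (directSum p.1 p.2) ⟨i.val, q1⟩ := castP_val e _ _ q1
      have e3 : ((directSum p.1 p.2) ⟨i.val, q1⟩ : ℕ) = p.1 ⟨i.val, i.2⟩ :=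
        directSum_val_lo _ _ _ i.2
      have e4 : (p.1 ⟨i.val, i.2⟩ : ℕ) = p.1 i := rfl
      omega
    have hdR : dR k σ' = p.2 := by
      apply Equiv.ext; intro i; apply Fin.ext
      have p0 : i.val < n - k := i.2
      have p1 : k + i.val < n := by omega
      have e1 : k + ((dR k σ') ⟨i.val, p0⟩ : ℕ) = σ' ⟨k + i.val, p1⟩ := dR_val' hkn' hSDk _
      have q1 : k + i.val < k + (n - k) := by omega
      have e2 : (σ' ⟨k + i.val, p1⟩ : ℕ) = (directSum p.1 p.2) ⟨k + i.val, q1⟩ :=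
        castP_val e _ _ q1
      have p2 : k + i.val - k < n - k := by omega
      have e3 : ((directSum p.1 p.2) ⟨k + i.val, q1⟩ : ℕ) =
          k + p.2 ⟨k + i.val - k, p2⟩ := directSum_val_hi _ _ _ (by show k ≤ k + i.val; omega)
      have e4 : (p.2 ⟨k + i.val - k, p2⟩ : ℕ) = p.2 ⟨i.val, p0⟩ := val_congr _ _ _ (by omega)
      have e5 : ((dR k σ') ⟨i.val, p0⟩ : ℕ) = (dR k σ') i := rfl
      have e6 : (p.2 ⟨i.val, p0⟩ : ℕ) = p.2 i := rfl
      omega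
    exact Prod.ext hdL hdR

lemma DF_card {n : ℕ} (hn : 2 ≤ n) :
    (DF n).card = ∑ k ∈ Finset.Ico 1 n, (IndF k).card * (SepF (n - k)).card := by
  rw [Finset.card_eq_sum_card_fiberwise (f := minCut) (t := Finset.Ico 1 n) ?h]
  · apply Finset.sum_congr rfl
    intro k hk
    rw [Finset.mem_Ico] at hk
    exact fiber_card (by omega) hk.2
  · intro σ hσ
    simp only [DF, Finset.mem_coe, Finset.mem_filter, Finset.mem_univ, true_and] at hσ
    obtain ⟨h1, h2, h3⟩ := minCut_spec hσ.2
    rw [Finset.mem_coe, Finset.mem_Ico]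
    omega

lemma KF_card (n : ℕ) : (KF n).card = (DF n).card := by
  apply Finset.card_bij' (fun σ _ => cpl σ) (fun σ _ => cpl σ)
  · intro σ hσ
    simp only [KF, DF, Finset.mem_filter, Finset.mem_univ, true_and] at *
    obtain ⟨hsep, k, hk0, hkn, hSK⟩ := hσ
    refine ⟨compl_sep hsep, k, hk0, hkn, ?_⟩
    rw [← cpl_cpl σ] at hSK
    exact (SK_compl_iff (cpl σ) (by omega)).mp hSK
  · intro σ hσ
    simp only [KF, DF, Finset.mem_filter, Finset.mem_univ, true_and] at *
    obtain ⟨hsep, k, hk0, hkn, hSD⟩ := hσ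
    exact ⟨compl_sep hsep, k, hk0, hkn, (SK_compl_iff σ (by omega)).mpr hSD⟩
  · intro σ _; exact cpl_cpl σ
  · intro σ _; exact cpl_cpl σ

lemma SepF_split {n : ℕ} (hn : 2 ≤ n) :
    (SepF n).card = (DF n).card + (KF n).card := by
  have hunion : SepF n = DF n ∪ KF n := by
    ext σ
    simp only [SepF, DF, KF, Finset.mem_union, Finset.mem_filter, Finset.mem_univ, true_and]
    constructor
    · intro hsep
      rcases sep_inversion hsep hn with h | h
      · exact Or.inl ⟨hsep, h⟩
      · exact Or.inr ⟨hsep, h⟩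
    · rintro (⟨h, _⟩ | ⟨h, _⟩) <;> exact h
  have hdisj : Disjoint (DF n) (KF n) := by
    rw [Finset.disjoint_left]
    intro σ hD hK
    simp only [DF, KF, Finset.mem_filter, Finset.mem_univ, true_and] at hD hK
    obtain ⟨_, k, hk0, hkn, hSD⟩ := hD
    obtain ⟨_, k', hk0', hkn', hSK⟩ := hK
    exact not_SD_and_SK σ hk0 hk0' hkn hkn' hSD hSK
  rw [hunion, Finset.card_union_of_disjoint hdisj]

lemma SepF_ind_split (n : ℕ) : (SepF n).card = (IndF n).card + (DF n).card := by
  have hunion : SepF n = IndF n ∪ DF n := by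
    ext σ
    simp only [SepF, IndF, DF, Finset.mem_union, Finset.mem_filter, Finset.mem_univ, true_and]
    tauto
  have hdisj : Disjoint (IndF n) (DF n) := by
    rw [Finset.disjoint_left]
    intro σ hI hD
    simp only [IndF, DF, Finset.mem_filter, Finset.mem_univ, true_and] at hI hD
    exact hI.2 hD.2
  rw [hunion, Finset.card_union_of_disjoint hdisj]

lemma SepF_one : (SepF 1).card = 1 := by
  have : SepF 1 = {Equiv.refl (Fin 1)} := by
    ext σ
    simp only [SepF, Finset.mem_filter, Finset.mem_univ, true_and, Finset.mem_singleton]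
    constructor
    · intro _; exact Subsingleton.elim _ _
    · intro h; rw [h]; exact Separable.single
  rw [this, Finset.card_singleton]

lemma IndF_one : (IndF 1).card = 1 := by
  have : IndF 1 = {Equiv.refl (Fin 1)} := by
    ext σ
    simp only [IndF, Finset.mem_filter, Finset.mem_univ, true_and, Finset.mem_singleton]
    constructor
    · intro _; exact Subsingleton.elim _ _
    · intro h
      rw [h]
      exact ⟨Separable.single, by rintro ⟨k, h1, h2, _⟩; omega⟩
  rw [this, Finset.card_singleton]

-- recurrence
lemma sep_rec {n : ℕ} (hn : 2 ≤ n) :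
    (SepF n).card = 2 * (SepF (n - 1)).card
      + ∑ k ∈ Finset.Ico 2 n, (SepF k).card * (SepF (n - k)).card := by
  have h2d : ∀ m, 2 ≤ m → (SepF m).card = 2 * (DF m).card := by
    intro m hm
    rw [SepF_split hm, KF_card]
    omega
  have hind : ∀ m, 2 ≤ m → 2 * (IndF m).card = (SepF m).card := by
    intro m hm
    have := SepF_ind_split m
    have := h2d m hm
    omega
  rw [h2d n hn, DF_card hn]
  rw [Finset.sum_eq_sum_Ico_succ_bot (by omega : 1 < n)]
  rw [mul_add, IndF_one, one_mul]
  have : 2 * ∑ k ∈ Finset.Ico (1+1) n, (IndF k).card * (SepF (n - k)).card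
      = ∑ k ∈ Finset.Ico 2 n, (SepF k).card * (SepF (n - k)).card := by
    rw [Finset.mul_sum]
    apply Finset.sum_congr rfl
    intro k hk
    rw [Finset.mem_Ico] at hk
    rw [← mul_assoc, hind k hk.1]
  omega

-- ===== analysis =====
noncomputable def xx : ℝ := 3 - 2 * Real.sqrt 2
noncomputable def LL : ℝ := Real.sqrt 2 - 1
noncomputable def sR (n : ℕ) : ℝ := (numSep n : ℝ) * xx ^ n
noncomputable def uu (k : ℕ) : ℝ := sR (k + 1)

lemma sqrt2_sq : Real.sqrt 2 ^ 2 = 2 := Real.sq_sqrt (by norm_num)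
lemma sqrt2_lt : Real.sqrt 2 < 3/2 := by
  nlinarith [sqrt2_sq, Real.sqrt_nonneg 2]
lemma sqrt2_gt : 1 < Real.sqrt 2 := by
  nlinarith [sqrt2_sq, Real.sqrt_nonneg 2]
lemma xx_pos : 0 < xx := by unfold xx; nlinarith [sqrt2_lt]
lemma LL_pos : 0 < LL := by unfold LL; nlinarith [sqrt2_gt]
lemma xx_le_LL : xx ≤ LL := by unfold xx LL; nlinarith [sqrt2_sq, sqrt2_gt]
lemma fixed_pt : xx + xx * LL + LL ^ 2 = LL := by
  unfold xx LL; nlinarith [sqrt2_sq]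

lemma numSep_one : numSep 1 = 1 := by rw [numSep_eq, SepF_one]

lemma sR_one : sR 1 = xx := by rw [sR, numSep_one]; simp

lemma sR_nonneg (n : ℕ) : 0 ≤ sR n := by
  apply mul_nonneg (Nat.cast_nonneg _)
  exact pow_nonneg (le_of_lt xx_pos) n

lemma numSep_rec {n : ℕ} (hn : 2 ≤ n) :
    (numSep n : ℝ) = 2 * (numSep (n - 1) : ℝ)
      + ∑ k ∈ Finset.Ico 2 n, (numSep k : ℝ) * (numSep (n - k) : ℝ) := by
  have h := sep_rec hn
  rw [numSep_eq]
  rw [h]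
  push_cast
  rw [numSep_eq]
  congr 1
  apply Finset.sum_congr rfl
  intro k _
  rw [numSep_eq, numSep_eq]

lemma sR_rec {n : ℕ} (hn : 2 ≤ n) :
    sR n = 2 * xx * sR (n - 1) + ∑ k ∈ Finset.Ico 2 n, sR k * sR (n - k) := by
  unfold sR
  rw [numSep_rec hn, add_mul, Finset.sum_mul]
  congr 1
  · have : xx ^ n = xx * xx ^ (n - 1) := by
      rw [← pow_succ']
      congr 1
      omega
    rw [this]; ring
  · apply Finset.sum_congr rfl
    intro k hk
    rw [Finset.mem_Ico] at hk
    have : xx ^ n = xx ^ k * xx ^ (n - k) := by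
      rw [← pow_add]
      congr 1
      omega
    rw [this]; ring

noncomputable def TT (N : ℕ) : ℝ := ∑ k ∈ Finset.range N, uu k

lemma uu_nonneg (k : ℕ) : 0 ≤ uu k := sR_nonneg _
lemma TT_nonneg (N : ℕ) : 0 ≤ TT N := Finset.sum_nonneg (fun k _ => uu_nonneg k)
lemma uu_zero : uu 0 = xx := sR_one

noncomputable def ww (m : ℕ) : ℝ := ∑ i ∈ Finset.Ico 2 (m + 2), sR i * sR (m + 2 - i)

lemma uu_succ (m : ℕ) : uu (m + 1) = 2 * xx * uu m + ww m := by
  have h := sR_rec (n := m + 2) (by omega)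
  have e : m + 2 - 1 = m + 1 := by omega
  rw [e] at h
  exact h

lemma ww_nonneg (m : ℕ) : 0 ≤ ww m :=
  Finset.sum_nonneg (fun i _ => mul_nonneg (sR_nonneg _) (sR_nonneg _))

lemma sum_Ico_sR (M : ℕ) : ∑ i ∈ Finset.Ico 1 (M + 2), sR i = TT (M + 1) := by
  rw [Finset.sum_Ico_eq_sum_range]
  have e : M + 2 - 1 = M + 1 := by omega
  rw [e, TT]
  apply Finset.sum_congr rfl
  intro k _
  rw [uu]
  congr 1
  omega

lemma sum_Ico2_sR (M : ℕ) : ∑ i ∈ Finset.Ico 2 (M + 2), sR i = TT (M + 1) - xx := by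
  have h := Finset.sum_eq_sum_Ico_succ_bot (by omega : 1 < M + 2) sR
  rw [sum_Ico_sR M] at h
  rw [sR_one] at h
  have e : 1 + 1 = 2 := rfl
  rw [e] at h
  linarith

lemma Q_bound (M : ℕ) :
    ∑ j ∈ Finset.range (M + 1), ww j ≤ (TT (M + 1) - xx) * TT (M + 1) := by
  have hQ : ∑ j ∈ Finset.range (M + 1), ww j =
      ∑ p ∈ (((Finset.Ico 2 (M + 2)) ×ˢ (Finset.Ico 1 (M + 2))).filter
        (fun p => p.1 + p.2 ≤ M + 2)), sR p.1 * sR p.2 := by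
    unfold ww
    rw [Finset.sum_sigma' (Finset.range (M + 1)) (fun j => Finset.Ico 2 (j + 2))
      (fun j i => sR i * sR (j + 2 - i))]
    apply Finset.sum_nbij' (fun p => (p.2, p.1 + 2 - p.2)) (fun q => ⟨q.1 + q.2 - 2, q.1⟩)
    · rintro ⟨j, i⟩ hp
      simp only [Finset.mem_sigma, Finset.mem_range, Finset.mem_Ico] at hp
      simp only [Finset.mem_filter, Finset.mem_product, Finset.mem_Ico]
      omega
    · rintro ⟨i, i'⟩ hq
      simp only [Finset.mem_filter, Finset.mem_product, Finset.mem_Ico] at hq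
      simp only [Finset.mem_sigma, Finset.mem_range, Finset.mem_Ico]
      omega
    · rintro ⟨j, i⟩ hp
      simp only [Finset.mem_sigma, Finset.mem_range, Finset.mem_Ico] at hp
      simp only [Sigma.mk.inj_iff]
      constructor
      · omega
      · apply heq_of_eq
        rfl
    · rintro ⟨i, i'⟩ hq
      dsimp only
      simp only [Finset.mem_filter, Finset.mem_product, Finset.mem_Ico] at hq
      simp only [Prod.mk.injEq]
      refine ⟨trivial, by omega⟩
    · rintro ⟨j, i⟩ hp
      rfl
  rw [hQ, ← sum_Ico2_sR M, ← sum_Ico_sR M, Finset.sum_mul_sum]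
  rw [← Finset.sum_product']
  apply Finset.sum_le_sum_of_subset_of_nonneg (Finset.filter_subset _ _)
  intro p _ _
  exact mul_nonneg (sR_nonneg _) (sR_nonneg _)

lemma TT_rec_bound (M : ℕ) :
    TT (M + 2) ≤ xx + 2 * xx * TT (M + 1) + (TT (M + 1) - xx) * TT (M + 1) := by
  have h1 : TT (M + 2) = ∑ k ∈ Finset.range (M + 1), uu (k + 1) + uu 0 :=
    Finset.sum_range_succ' uu (M + 1)
  rw [h1, uu_zero]
  have h2 : ∑ k ∈ Finset.range (M + 1), uu (k + 1)
      = 2 * xx * TT (M + 1) + ∑ k ∈ Finset.range (M + 1), ww k := by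
    rw [TT, Finset.mul_sum]
    rw [← Finset.sum_add_distrib]
    apply Finset.sum_congr rfl
    intro k _
    exact uu_succ k
  rw [h2]
  have := Q_bound M
  linarith

lemma TT_le_LL : ∀ N, TT N ≤ LL := by
  intro N
  induction N with
  | zero => simp [TT]; exact le_of_lt LL_pos
  | succ M ih =>
    match M, ih with
    | 0, _ =>
      have : TT 1 = xx := by simp [TT, uu_zero]
      rw [this]; exact xx_le_LL
    | (M' + 1), ih =>
      have hb := TT_rec_bound M'
      have h0 := TT_nonneg (M' + 1)
      have hfix := fixed_pt
      have hx := xx_pos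
      have hL := LL_pos
      nlinarith [ih, mul_le_mul_of_nonneg_left ih (le_of_lt xx_pos)]

lemma uu_summable : Summable uu :=
  summable_of_sum_range_le uu_nonneg (fun n => TT_le_LL n)

noncomputable def SS : ℝ := ∑' k, uu k

noncomputable def vv (p : ℕ) : ℝ := uu (p + 1)

lemma vv_summable : Summable vv := (summable_nat_add_iff 1).mpr uu_summable

lemma SS_eq : SS = xx + ∑' p, vv p := by
  rw [SS, Summable.tsum_eq_zero_add uu_summable, uu_zero]
  rfl

lemma ww_zero : ww 0 = 0 := by
  rw [ww]
  simp

lemma ww_eq_cauchy (n : ℕ) : ww (n + 1) = ∑ p ∈ Finset.range (n + 1), vv p * uu (n - p) := by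
  rw [ww]
  rw [Finset.sum_Ico_eq_sum_range]
  have e : n + 1 + 2 - 2 = n + 1 := by omega
  rw [e]
  apply Finset.sum_congr rfl
  intro p hp
  rw [Finset.mem_range] at hp
  congr 1
  · rw [vv, uu]
    congr 1
    omega
  · rw [uu]
    congr 1
    omega

lemma cauchy_summable : Summable (fun n => ∑ p ∈ Finset.range (n + 1), vv p * uu (n - p)) := by
  apply Summable.of_norm
  apply summable_norm_sum_mul_range_of_summable_norm
  · simpa [vv, Real.norm_of_nonneg, uu_nonneg] using
      (vv_summable.congr (fun p => (Real.norm_of_nonneg (uu_nonneg (p+1))).symm))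
  · exact uu_summable.congr (fun p => (Real.norm_of_nonneg (uu_nonneg p)).symm)

lemma ww_summable : Summable ww := by
  apply (summable_nat_add_iff 1).mp
  exact cauchy_summable.congr (fun n => (ww_eq_cauchy n).symm)

lemma tsum_ww : ∑' m, ww m = (SS - xx) * SS := by
  have h1 : ∑' m, ww m = ww 0 + ∑' n, ww (n + 1) := Summable.tsum_eq_zero_add ww_summable
  have h2 : ∑' n, ww (n + 1) = (∑' p, vv p) * (∑' k, uu k) := by
    rw [tsum_congr ww_eq_cauchy]
    exact (Summable.tsum_mul_tsum_eq_tsum_sum_range vv_summable uu_summable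
      (summable_mul_of_summable_norm
        (vv_summable.congr (fun p => (Real.norm_of_nonneg (uu_nonneg (p+1))).symm)).of_norm.norm
        (uu_summable.congr (fun p => (Real.norm_of_nonneg (uu_nonneg p)).symm)).of_norm.norm)).symm
  have h3 : (∑' p, vv p) = SS - xx := by
    have := SS_eq
    linarith
  rw [h1, h2, h3, ww_zero, SS]
  ring

lemma SS_fixed : SS = xx + 2 * xx * SS + (SS - xx) * SS := by
  have h1 : SS = xx + ∑' k, uu (k + 1) := by
    rw [SS, Summable.tsum_eq_zero_add uu_summable, uu_zero]
  have h2 : ∑' k, uu (k + 1) = 2 * xx * SS + ∑' m, ww m := by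
    rw [tsum_congr uu_succ, Summable.tsum_add (uu_summable.mul_left (2 * xx)) ww_summable]
    rw [SS, tsum_mul_left]
  rw [tsum_ww] at h2
  linarith [h1, h2]

lemma SS_eq_LL : SS = LL := by
  have h := SS_fixed
  have hL2 : LL ^ 2 = xx := by unfold xx LL; nlinarith [sqrt2_sq]
  have h2L : 2 * LL = 1 - xx := by unfold xx LL; ring
  have hsq : (SS - LL) ^ 2 = 0 := by linear_combination -h + hL2 - SS * h2L
  have := pow_eq_zero_iff (n := 2) (by omega) |>.mp hsq
  linarith [this]

/-- `P(R=k) = s_k (3-2√2)^k/(√2-1)`, `k ≥ 1`, defines a probability distribution on the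
positive integers: `∑_{k=1}^∞ s_k (3-2√2)^k = √2 - 1`. -/
theorem R_dist_sums_to_one :
    (∀ k : ℕ, 1 ≤ k → 0 ≤ (numSep k : ℝ) * (3 - 2 * Real.sqrt 2) ^ k / (Real.sqrt 2 - 1)) ∧
    ∑' k : ℕ, (numSep (k + 1) : ℝ) * (3 - 2 * Real.sqrt 2) ^ (k + 1) = Real.sqrt 2 - 1 := by
  constructor
  · intro k _
    apply div_nonneg
    · apply mul_nonneg (Nat.cast_nonneg _)
      exact pow_nonneg (le_of_lt xx_pos) k
    · exact le_of_lt LL_pos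
  · have he : (fun k : ℕ => (numSep (k + 1) : ℝ) * (3 - 2 * Real.sqrt 2) ^ (k + 1)) = uu := by
      funext k
      rw [uu, sR, xx]
    rw [he]
    have := SS_eq_LL
    rw [SS] at this
    rw [this, LL]
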